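/- Let (η_i)_{i≥1} be a nonincreasing sequence of positive reals, M ≥ 0, and (x_i)_{i≥0}, (u_i)_{i≥0}, (v_i)_{i≥0} real sequences with 0 ≤ x_i ≤ M for all i. Suppose that x_{i+1} ≤ (1−2η_{i+1})·x_i + 2η_{i+1}·u_i + v_i for all i ∈ ℕ. Then for every n ∈ ℕ: (1/(1+n))·∑_{i=0}^{n} x_i ≤ M/(2(1+n)·η_{n+1}) + (1/(1+n))·∑_{i=0}^{n} u_i + (1/(1+n))·∑_{i=0}^{n} v_i/(2η_{i+1}). -/

import Mathlib

open Finset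

/-- Deterministic averaging bound: if `0 ≤ x i ≤ M` satisfies the one-step
recursion `x (i+1) ≤ (1 - 2η (i+1)) x i + 2η (i+1) u i + v i` for a
nonincreasing positive step-size sequence `(η i)_{i ≥ 1}`, then the Cesàro
average of `x` is bounded as stated. -/
theorem averaged_recursion_bound
    (η : ℕ → ℝ) (hηpos : ∀ i, 1 ≤ i → 0 < η i)
    (hηmono : ∀ i j, 1 ≤ i → i ≤ j → η j ≤ η i)
    (M : ℝ) (hM : 0 ≤ M)
    (x u v : ℕ → ℝ) (hx0 : ∀ i, 0 ≤ x i) (hxM : ∀ i, x i ≤ M)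
    (hrec : ∀ i : ℕ, x (i + 1) ≤ (1 - 2 * η (i + 1)) * x i + 2 * η (i + 1) * u i + v i)
    (n : ℕ) :
    (1 / (1 + (n : ℝ))) * ∑ i ∈ Finset.range (n + 1), x i ≤
      M / (2 * (1 + (n : ℝ)) * η (n + 1))
      + (1 / (1 + (n : ℝ))) * ∑ i ∈ Finset.range (n + 1), u i
      + (1 / (1 + (n : ℝ))) * ∑ i ∈ Finset.range (n + 1), v i / (2 * η (i + 1)) := by
  have hpos : ∀ i : ℕ, (0:ℝ) < 2 * η (i + 1) := by
    intro i
    have := hηpos (i + 1) (by omega)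
    linarith
  -- Abel / telescoping bound
  have key : ∀ m : ℕ,
      ∑ i ∈ Finset.range (m + 1), (x i - x (i + 1)) / (2 * η (i + 1))
        + x (m + 1) / (2 * η (m + 1)) ≤ M / (2 * η (m + 1)) := by
    intro m
    induction m with
    | zero =>
      simp only [zero_add, Finset.sum_range_one]
      have h := hpos 0
      rw [← add_div, div_le_div_iff₀ h h]
      nlinarith [hxM 0, hx0 0]
    | succ k ih =>
      rw [Finset.sum_range_succ]
      have h1 := hpos k
      have h2 := hpos (k + 1)
      have hmono : η (k + 1 + 1) ≤ η (k + 1) := hηmono (k + 1) (k + 2) (by omega) (by omega)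
      have hinv : 1 / (2 * η (k + 1)) ≤ 1 / (2 * η (k + 1 + 1)) := by
        apply one_div_le_one_div_of_le (by linarith)
        linarith
      have e1 : (x (k + 1) - x (k + 1 + 1)) / (2 * η (k + 1 + 1))
          + x (k + 1 + 1) / (2 * η (k + 1 + 1)) = x (k + 1) / (2 * η (k + 1 + 1)) := by
        field_simp
        ring
      have e2 : x (k + 1) / (2 * η (k + 1 + 1))
          ≤ x (k + 1) / (2 * η (k + 1))
            + M * (1 / (2 * η (k + 1 + 1)) - 1 / (2 * η (k + 1))) := by
        have hxk := hx0 (k + 1)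
        have hxkM := hxM (k + 1)
        have : x (k + 1) * (1 / (2 * η (k + 1 + 1)) - 1 / (2 * η (k + 1)))
            ≤ M * (1 / (2 * η (k + 1 + 1)) - 1 / (2 * η (k + 1))) := by
          apply mul_le_mul_of_nonneg_right hxkM
          linarith
        have e : x (k + 1) / (2 * η (k + 1 + 1))
            = x (k + 1) / (2 * η (k + 1))
              + x (k + 1) * (1 / (2 * η (k + 1 + 1)) - 1 / (2 * η (k + 1))) := by
          field_simp
          ring
        linarith
      have e3 : M / (2 * η (k + 1))
          + M * (1 / (2 * η (k + 1 + 1)) - 1 / (2 * η (k + 1)))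
          = M / (2 * η (k + 1 + 1)) := by
        field_simp
        ring
      linarith
  -- per-term bound from the recursion
  have step : ∀ i : ℕ,
      x i ≤ (x i - x (i + 1)) / (2 * η (i + 1)) + u i + v i / (2 * η (i + 1)) := by
    intro i
    have h := hpos i
    have hr := hrec i
    have h1 : x i ≤ ((x i - x (i + 1)) + 2 * η (i + 1) * u i + v i) / (2 * η (i + 1)) := by
      rw [le_div_iff₀ h]
      nlinarith
    have h2 : ((x i - x (i + 1)) + 2 * η (i + 1) * u i + v i) / (2 * η (i + 1))
        = (x i - x (i + 1)) / (2 * η (i + 1)) + u i + v i / (2 * η (i + 1)) := by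
      rw [add_div, add_div, mul_div_cancel_left₀ _ h.ne']
    linarith
  -- sum the per-term bounds
  have hsum : ∑ i ∈ Finset.range (n + 1), x i
      ≤ ∑ i ∈ Finset.range (n + 1), (x i - x (i + 1)) / (2 * η (i + 1))
        + ∑ i ∈ Finset.range (n + 1), u i
        + ∑ i ∈ Finset.range (n + 1), v i / (2 * η (i + 1)) := by
    have := Finset.sum_le_sum (fun i _ => step i :
      ∀ i ∈ Finset.range (n + 1), x i ≤ (x i - x (i + 1)) / (2 * η (i + 1)) + u i + v i / (2 * η (i + 1)))
    simpa [Finset.sum_add_distrib] using this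
  have hS : ∑ i ∈ Finset.range (n + 1), (x i - x (i + 1)) / (2 * η (i + 1))
      ≤ M / (2 * η (n + 1)) := by
    have hk := key n
    have : 0 ≤ x (n + 1) / (2 * η (n + 1)) :=
      div_nonneg (hx0 (n + 1)) (le_of_lt (hpos n))
    linarith
  have hN : (0:ℝ) < 1 + (n : ℝ) := by positivity
  have hfin : ∑ i ∈ Finset.range (n + 1), x i
      ≤ M / (2 * η (n + 1)) + ∑ i ∈ Finset.range (n + 1), u i
        + ∑ i ∈ Finset.range (n + 1), v i / (2 * η (i + 1)) := by linarith
  have := mul_le_mul_of_nonneg_left hfin (le_of_lt (one_div_pos.mpr hN))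
  have heq : (1 / (1 + (n:ℝ))) * (M / (2 * η (n + 1))) = M / (2 * (1 + (n:ℝ)) * η (n + 1)) := by
    field_simp
  calc (1 / (1 + (n : ℝ))) * ∑ i ∈ Finset.range (n + 1), x i
      ≤ (1 / (1 + (n:ℝ))) * (M / (2 * η (n + 1)) + ∑ i ∈ Finset.range (n + 1), u i
        + ∑ i ∈ Finset.range (n + 1), v i / (2 * η (i + 1))) := this
    _ = M / (2 * (1 + (n : ℝ)) * η (n + 1))
      + (1 / (1 + (n : ℝ))) * ∑ i ∈ Finset.range (n + 1), u i
      + (1 / (1 + (n : ℝ))) * ∑ i ∈ Finset.range (n + 1), v i / (2 * η (i + 1)) := by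
        rw [mul_add, mul_add, heq]
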